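/- Let K be a field and let R and R* be subrings of K with fraction field K, with R ≠ K and R* ≠ K. Then the following are equivalent: (1) the R-adic topology on K refines the R*-adic topology; (2) R* is open in the R-adic topology; (3) there exists α ∈ K^× with α·R ⊆ R*; (4) R is a bounded subset of K with respect to the R*-adic topology. -/

import Mathlib

open Topology

/-- The collection `{aR + b : a ∈ K^×, b ∈ K}`, a basis for the `R`-adic topology. -/
def adicBasis {K : Type*} [Field K] (R : Subring K) : Set (Set K) :=
  {s | ∃ a b : K, a ≠ 0 ∧ s = {x | ∃ r ∈ R, x = a * r + b}}

/-- The `R`-adic topology on `K`: the topology with basis `{aR + b : a ∈ K^×, b ∈ K}`. -/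
def adicTopology {K : Type*} [Field K] (R : Subring K) : TopologicalSpace K :=
  TopologicalSpace.generateFrom (adicBasis R)

lemma adic_coset_shift {K : Type*} [Field K] (R : Subring K) {a b x : K}
    (hx : ∃ r ∈ R, x = a * r + b) :
    {y : K | ∃ r ∈ R, y = a * r + b} = {y : K | ∃ r ∈ R, y = a * r + x} := by
  obtain ⟨r₀, hr₀, rfl⟩ := hx
  ext y
  constructor
  · rintro ⟨r, hr, rfl⟩
    exact ⟨r - r₀, R.sub_mem hr hr₀, by ring⟩
  · rintro ⟨r, hr, rfl⟩
    exact ⟨r + r₀, R.add_mem hr hr₀, by ring⟩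

lemma adic_isBasis {K : Type*} [Field K] (R : Subring K)
    (hfrac : ∀ x : K, ∃ a ∈ R, ∃ b ∈ R, b ≠ 0 ∧ x = a / b) :
    @TopologicalSpace.IsTopologicalBasis K (adicTopology R) (adicBasis R) := by
  letI := adicTopology R
  refine ⟨?_, ?_, rfl⟩
  · rintro t₁ ⟨a₁, b₁, ha₁, rfl⟩ t₂ ⟨a₂, b₂, ha₂, rfl⟩ x ⟨⟨r₁, hr₁, hx₁⟩, ⟨r₂, hr₂, hx₂⟩⟩
    obtain ⟨p₁, hp₁, q₁, hq₁, hq₁0, ha1⟩ := hfrac a₁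
    obtain ⟨p₂, hp₂, q₂, hq₂, hq₂0, ha2⟩ := hfrac a₂
    have e₁ : p₁ = a₁ * q₁ := by rw [ha1]; field_simp
    have e₂ : p₂ = a₂ * q₂ := by rw [ha2]; field_simp
    have hp₁0 : p₁ ≠ 0 := by rw [e₁]; exact mul_ne_zero ha₁ hq₁0
    have hp₂0 : p₂ ≠ 0 := by rw [e₂]; exact mul_ne_zero ha₂ hq₂0
    refine ⟨{y : K | ∃ r ∈ R, y = p₁ * p₂ * r + x},
      ⟨p₁ * p₂, x, mul_ne_zero hp₁0 hp₂0, rfl⟩, ⟨0, R.zero_mem, by ring⟩, ?_⟩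
    rintro y ⟨r, hr, rfl⟩
    constructor
    · exact ⟨q₁ * p₂ * r + r₁, R.add_mem (R.mul_mem (R.mul_mem hq₁ hp₂) hr) hr₁,
        by rw [hx₁, e₁]; ring⟩
    · exact ⟨q₂ * p₁ * r + r₂, R.add_mem (R.mul_mem (R.mul_mem hq₂ hp₁) hr) hr₂,
        by rw [hx₂, e₂]; ring⟩
  · apply Set.eq_univ_of_forall
    intro x
    refine Set.mem_sUnion.2 ⟨{y : K | ∃ r ∈ R, y = 1 * r + x}, ⟨1, x, one_ne_zero, rfl⟩,
      ⟨0, R.zero_mem, by ring⟩⟩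

lemma adic_self_mem_basis {K : Type*} [Field K] (R : Subring K) :
    (R : Set K) ∈ adicBasis R := by
  refine ⟨1, 0, one_ne_zero, ?_⟩
  ext x
  simp

/-- For subrings `R, R*` of a field `K`, each with fraction field `K` and
different from `K`, the following are equivalent: (1) the `R`-adic topology refines the
`R*`-adic topology; (2) `R*` is `R`-adically open; (3) `αR ⊆ R*` for some `α ∈ K^×`;
(4) `R` is bounded in the `R*`-adic topology. -/
theorem statement0 {K : Type*} [Field K] (R Rs : Subring K)
    (hR : R ≠ ⊤) (hRs : Rs ≠ ⊤)
    (hRfrac : ∀ x : K, ∃ a ∈ R, ∃ b ∈ R, b ≠ 0 ∧ x = a / b)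
    (hRsfrac : ∀ x : K, ∃ a ∈ Rs, ∃ b ∈ Rs, b ≠ 0 ∧ x = a / b) :
    List.TFAE
      [ (∀ s : Set K, IsOpen[adicTopology Rs] s → IsOpen[adicTopology R] s),
        IsOpen[adicTopology R] (Rs : Set K),
        (∃ α : K, α ≠ 0 ∧ ∀ r ∈ R, α * r ∈ Rs),
        (∀ U ∈ @nhds K (adicTopology Rs) 0, ∃ V ∈ @nhds K (adicTopology Rs) 0,
          ∀ v ∈ V, ∀ b ∈ (R : Set K), v * b ∈ U) ] := by
  have hBR := adic_isBasis R hRfrac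
  have hBRs := adic_isBasis Rs hRsfrac
  have hOR : ∀ s : Set K, IsOpen[adicTopology R] s ↔
      ∀ a ∈ s, ∃ t ∈ adicBasis R, a ∈ t ∧ t ⊆ s := fun s =>
    @TopologicalSpace.IsTopologicalBasis.isOpen_iff K (adicTopology R) s (adicBasis R) hBR
  have hORs : ∀ s : Set K, IsOpen[adicTopology Rs] s ↔
      ∀ a ∈ s, ∃ t ∈ adicBasis Rs, a ∈ t ∧ t ⊆ s := fun s =>
    @TopologicalSpace.IsTopologicalBasis.isOpen_iff K (adicTopology Rs) s (adicBasis Rs) hBRs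
  have hNRs : ∀ (a : K) (s : Set K), s ∈ @nhds K (adicTopology Rs) a ↔
      ∃ t ∈ adicBasis Rs, a ∈ t ∧ t ⊆ s := fun a s =>
    @TopologicalSpace.IsTopologicalBasis.mem_nhds_iff K (adicTopology Rs) a s (adicBasis Rs) hBRs
  tfae_have 1 → 2
  | h => by
    apply h
    rw [hORs]
    intro a ha
    exact ⟨Rs, adic_self_mem_basis Rs, ha, subset_rfl⟩
  tfae_have 2 → 3
  | h => by
    obtain ⟨t, ⟨a, b, ha, rfl⟩, h0, hts⟩ := (hOR _).1 h 0 Rs.zero_mem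
    have hsh := adic_coset_shift R (x := (0 : K)) h0
    refine ⟨a, ha, fun r hr => ?_⟩
    have : a * r + 0 ∈ {y : K | ∃ r ∈ R, y = a * r + 0} := ⟨r, hr, rfl⟩
    rw [← hsh] at this
    simpa using hts this
  tfae_have 3 → 1
  | ⟨α, hα, hαR⟩ => by
    intro s hs
    rw [hOR]
    intro x hx
    obtain ⟨t, ⟨a, b, ha, rfl⟩, hxt, hts⟩ := (hORs _).1 hs x hx
    have hsh := adic_coset_shift Rs (x := x) hxt
    refine ⟨{y : K | ∃ r ∈ R, y = a * α * r + x},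
      ⟨a * α, x, mul_ne_zero ha hα, rfl⟩, ⟨0, R.zero_mem, by ring⟩, ?_⟩
    rintro y ⟨r, hr, rfl⟩
    apply hts
    rw [hsh]
    exact ⟨α * r, hαR r hr, by ring⟩
  tfae_have 3 → 4
  | ⟨α, hα, hαR⟩ => by
    intro U hU
    obtain ⟨t, ⟨a, b, ha, rfl⟩, h0, htU⟩ := (hNRs _ _).1 hU
    have hsh := adic_coset_shift Rs (x := (0 : K)) h0
    refine ⟨{y : K | ∃ s ∈ Rs, y = a * α * s + 0}, ?_, ?_⟩
    · exact (hNRs _ _).2 ⟨_, ⟨a * α, 0, mul_ne_zero ha hα, rfl⟩,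
        ⟨0, Rs.zero_mem, by ring⟩, subset_rfl⟩
    · rintro v ⟨s, hs, rfl⟩ r hr
      apply htU
      rw [hsh]
      exact ⟨s * (α * r), Rs.mul_mem hs (hαR r hr), by ring⟩
  tfae_have 4 → 3
  | h => by
    obtain ⟨V, hV, hVb⟩ := h (Rs : Set K)
      ((hNRs _ _).2 ⟨Rs, adic_self_mem_basis Rs, Rs.zero_mem, subset_rfl⟩)
    obtain ⟨t, ⟨a, b, ha, rfl⟩, h0, htV⟩ := (hNRs _ _).1 hV
    have hsh := adic_coset_shift Rs (x := (0 : K)) h0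
    have haV : a ∈ V := by
      apply htV
      rw [hsh]
      exact ⟨1, Rs.one_mem, by ring⟩
    exact ⟨a, ha, fun r hr => hVb a haV r hr⟩
  tfae_finish
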